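/- Let V be a finite-dimensional real inner-product space and L_1, …, L_m subspaces with dim L_α ≥ |α| for all α ⊆ {1,…,m} (L_α := Σ_{i∈α} L_i). Let η be the union of all subcritical sets (sets α with dim L_α = |α|), and let P denote orthogonal projection onto the orthogonal complement of L_η. Then for every nonempty α ⊆ {1,…,m} \ η, one has dim(Σ_{i∈α} P(L_i)) ≥ |α| + 1. -/

import Mathlib

open Module Submodule

private lemma biSup_finset_union' {ι V : Type*} [DecidableEq ι] [AddCommGroup V]
    [Module ℝ V] (f : ι → Submodule ℝ V) (s t : Finset ι) :
    (⨆ i ∈ (s ∪ t), f i) = (⨆ i ∈ s, f i) ⊔ ⨆ i ∈ t, f i := by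
  rw [← Finset.sup_eq_iSup, ← Finset.sup_eq_iSup, ← Finset.sup_eq_iSup, Finset.sup_union]

private lemma union_subcrit {V : Type*} [NormedAddCommGroup V] [InnerProductSpace ℝ V]
    [FiniteDimensional ℝ V] {m : ℕ} (L : Fin m → Submodule ℝ V)
    (hsub : ∀ α : Finset (Fin m), α.card ≤ Module.finrank ℝ ↥(⨆ i ∈ α, L i))
    (α β : Finset (Fin m))
    (hα : Module.finrank ℝ ↥(⨆ i ∈ α, L i) = α.card)
    (hβ : Module.finrank ℝ ↥(⨆ i ∈ β, L i) = β.card) :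
    Module.finrank ℝ ↥(⨆ i ∈ α ∪ β, L i) = (α ∪ β).card := by
  refine le_antisymm ?_ (hsub _)
  rw [biSup_finset_union']
  have hsum := Submodule.finrank_sup_add_finrank_inf_eq (⨆ i ∈ α, L i) (⨆ i ∈ β, L i)
  have hint : (α ∩ β).card ≤
      Module.finrank ℝ ↥((⨆ i ∈ α, L i) ⊓ ⨆ i ∈ β, L i) := by
    refine le_trans (hsub (α ∩ β)) (Submodule.finrank_mono (le_inf ?_ ?_))
    · exact biSup_mono fun i hi => Finset.mem_of_mem_inter_left hi
    · exact biSup_mono fun i hi => Finset.mem_of_mem_inter_right hi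
  have hcard := Finset.card_union_add_card_inter α β
  omega

/-- Let `L₁,…,L_m` be subspaces of a finite-dimensional real inner product space with
`dim L_α ≥ |α|` for every `α`. Let `η` be the union of all subcritical sets
(`α` with `dim L_α = |α|`), and let `P` be the orthogonal projection onto `(L_η)ᗮ`.
Then the projected collection is critical: for every nonempty `α ⊆ {1,…,m} \ η`,
`dim (Σ_{i∈α} P(L_i)) ≥ |α| + 1`. -/
theorem stmt5 {V : Type*} [NormedAddCommGroup V] [InnerProductSpace ℝ V]
    [FiniteDimensional ℝ V] {m : ℕ} (L : Fin m → Submodule ℝ V)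
    (hsub : ∀ α : Finset (Fin m),
      α.card ≤ Module.finrank ℝ ↥(⨆ i ∈ α, L i))
    (η : Finset (Fin m))
    (hη : ∀ i, i ∈ η ↔ ∃ α : Finset (Fin m),
      Module.finrank ℝ ↥(⨆ j ∈ α, L j) = α.card ∧ i ∈ α) :
    ∀ α : Finset (Fin m), α.Nonempty → (∀ i ∈ α, i ∉ η) →
      α.card + 1 ≤ Module.finrank ℝ
        ↥(⨆ i ∈ α, (L i).map
            (((⨆ j ∈ η, L j)ᗮ).subtypeL.comp
              (orthogonalProjection (⨆ j ∈ η, L j)ᗮ)).toLinearMap) := by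
  classical
  set W : Submodule ℝ V := ⨆ j ∈ η, L j with hW
  -- η is subcritical
  have hηsub : Module.finrank ℝ ↥W = η.card := by
    have key : ∀ s : Finset (Fin m), s ⊆ η → ∃ γ : Finset (Fin m),
        Module.finrank ℝ ↥(⨆ j ∈ γ, L j) = γ.card ∧ s ⊆ γ ∧ γ ⊆ η := by
      intro s
      induction s using Finset.induction_on with
      | empty => intro _; exact ⟨∅, by simp, by simp, by simp⟩
      | @insert a s ha ih =>
        intro h
        obtain ⟨γ, hγ, hsγ, hγη⟩ := ih (fun j hj => h (Finset.mem_insert_of_mem hj))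
        obtain ⟨β, hβ, haβ⟩ := (hη a).1 (h (Finset.mem_insert_self a s))
        have hβη : β ⊆ η := fun j hj => (hη j).2 ⟨β, hβ, hj⟩
        refine ⟨γ ∪ β, union_subcrit L hsub γ β hγ hβ, ?_, Finset.union_subset hγη hβη⟩
        exact Finset.insert_subset (Finset.mem_union_right γ haβ)
          (hsγ.trans Finset.subset_union_left)
    obtain ⟨γ, hγ, hηγ, hγη⟩ := key η le_rfl
    have : γ = η := Finset.Subset.antisymm hγη hηγ
    rw [hW, ← this, hγ]
  intro α hne hαη
  set P : V →L[ℝ] V := Wᗮ.subtypeL.comp (orthogonalProjection Wᗮ) with hP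
  have hker : LinearMap.ker P.toLinearMap = W := by
    rw [hP, ContinuousLinearMap.toLinearMap_comp, LinearMap.ker_comp,
      Submodule.toLinearMap_subtypeL, Submodule.ker_subtype, Submodule.comap_bot]
    ext x
    simp only [LinearMap.mem_ker, ContinuousLinearMap.coe_coe,
      Submodule.orthogonalProjectionOnto_eq_zero_iff]
    rw [Submodule.orthogonal_orthogonal]
  set U : Submodule ℝ V := (⨆ i ∈ α, L i) ⊔ W with hU
  have hWU : W ≤ U := le_sup_right
  -- target submodule equals map P U
  have hmap : (⨆ i ∈ α, (L i).map P.toLinearMap) = U.map P.toLinearMap := by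
    have hmapW : W.map P.toLinearMap = ⊥ := by
      rw [← hker]; exact eq_bot_iff.2 (Submodule.map_le_iff_le_comap.2 le_rfl)
    rw [hU, Submodule.map_sup, hmapW, sup_bot_eq]
    simp only [Submodule.map_iSup]
  -- rank-nullity for P restricted to U
  have hrn := LinearMap.finrank_range_add_finrank_ker (P.toLinearMap.domRestrict U)
  have hrange : LinearMap.range (P.toLinearMap.domRestrict U) = U.map P.toLinearMap :=
    LinearMap.range_domRestrict U P.toLinearMap
  have hkerU : Module.finrank ℝ ↥(LinearMap.ker (P.toLinearMap.domRestrict U))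
      = Module.finrank ℝ ↥W := by
    rw [LinearMap.ker_domRestrict, hker]
    exact (Submodule.comapSubtypeEquivOfLe hWU).finrank_eq
  -- dim U ≥ |α ∪ η| + 1
  have hdisj : Disjoint α η := Finset.disjoint_left.2 fun i hi => hαη i hi
  have hUiSup : (⨆ i ∈ α ∪ η, L i) = U := by
    rw [biSup_finset_union', hU, hW]
  have hUge : (α ∪ η).card + 1 ≤ Module.finrank ℝ ↥U := by
    rcases lt_or_eq_of_le (hsub (α ∪ η)) with hlt | heq
    · rw [hUiSup] at hlt; omega
    · exfalso
      obtain ⟨i, hi⟩ := hne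
      exact hαη i hi ((hη i).2 ⟨α ∪ η, heq.symm, Finset.mem_union_left η hi⟩)
  have hcard : (α ∪ η).card = α.card + η.card := Finset.card_union_of_disjoint hdisj
  rw [hrange, hkerU, hηsub] at hrn
  rw [hmap]
  omega
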